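/- Let n ≥ 2, let f : E^n → E^n be a function, let r > 0 be a distance preserved by f, and let x₁, x₂ ∈ E^n. If d(x₁, x₂) ≤ 2r, then d(f(x₁), f(x₂)) ≤ 2r. -/

import Mathlib

lemma aux_exists_orth {n : ℕ} (hn : 2 ≤ n) (v : EuclideanSpace ℝ (Fin n)) :
    ∃ w : EuclideanSpace ℝ (Fin n), ‖w‖ = 1 ∧ inner ℝ v w = (0:ℝ) := by
  have hK : (Submodule.span ℝ {v}) ≠ ⊤ := by
    intro hK
    have h1 : Module.finrank ℝ (Submodule.span ℝ ({v} : Set (EuclideanSpace ℝ (Fin n)))) ≤ 1 := by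
      simpa using finrank_span_le_card ({v} : Set (EuclideanSpace ℝ (Fin n)))
    rw [hK] at h1
    simp [finrank_euclideanSpace] at h1
    omega
  have hne : (Submodule.span ℝ ({v} : Set (EuclideanSpace ℝ (Fin n))))ᗮ ≠ ⊥ := fun hb =>
    hK (Submodule.orthogonal_eq_bot_iff.mp hb)
  obtain ⟨w, hw, hw0⟩ := (Submodule.ne_bot_iff _).mp hne
  refine ⟨‖w‖⁻¹ • w, ?_, ?_⟩
  · rw [norm_smul, norm_inv, norm_norm, inv_mul_cancel₀ (norm_ne_zero_iff.mpr hw0)]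
  · have h0 : inner ℝ v w = (0:ℝ) := by
      have := hw v (Submodule.mem_span_singleton_self v)
      exact this
    rw [real_inner_smul_right, h0, mul_zero]

lemma aux_norm_comb {n : ℕ} {u w : EuclideanSpace ℝ (Fin n)} (hu : ‖u‖ = 1) (hw : ‖w‖ = 1)
    (huw : inner ℝ u w = (0:ℝ)) (a b : ℝ) : ‖a • u + b • w‖ = Real.sqrt (a^2 + b^2) := by
  have hsq : ‖a • u + b • w‖^2 = a^2 + b^2 := by
    rw [norm_add_sq_real, real_inner_smul_left, real_inner_smul_right, huw,
      norm_smul, norm_smul, hu, hw]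
    simp [mul_pow, sq_abs]
  rw [← hsq, Real.sqrt_sq (norm_nonneg _)]

lemma aux_exists_mid {n : ℕ} (hn : 2 ≤ n) (r : ℝ) (hr : 0 < r)
    (x₁ x₂ : EuclideanSpace ℝ (Fin n)) (h : dist x₁ x₂ ≤ 2 * r) :
    ∃ z, dist x₁ z = r ∧ dist x₂ z = r := by
  set v := x₂ - x₁ with hv
  obtain ⟨w, hw1, hw0⟩ := aux_exists_orth hn v
  by_cases hvz : v = 0
  · have hx : x₂ = x₁ := by
      have := sub_eq_zero.mp hvz; exact this
    refine ⟨x₁ + r • w, ?_, ?_⟩ <;>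
      simp [hx, dist_eq_norm, norm_smul, abs_of_pos hr, hw1]
  · set d := ‖v‖ with hd
    have hd0 : 0 < d := norm_pos_iff.mpr hvz
    set u := ‖v‖⁻¹ • v with hu
    have hun : ‖u‖ = 1 := by
      rw [hu, norm_smul, norm_inv, norm_norm, inv_mul_cancel₀ hd0.ne']
    have huw : inner ℝ u w = (0:ℝ) := by
      rw [hu, real_inner_smul_left, hw0, mul_zero]
    have hdu : d • u = v := by
      rw [hu, smul_smul, mul_inv_cancel₀ hd0.ne', one_smul]
    have hdr : d ≤ 2 * r := by rwa [dist_eq_norm', ← hv] at h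
    have hs0 : 0 ≤ r^2 - (d/2)^2 := by nlinarith
    set s := Real.sqrt (r^2 - (d/2)^2) with hs
    have hs2 : s^2 = r^2 - (d/2)^2 := Real.sq_sqrt hs0
    refine ⟨x₁ + ((d/2) • u + s • w), ?_, ?_⟩
    · rw [dist_eq_norm]
      have : x₁ - (x₁ + ((d/2) • u + s • w)) = -((d/2) • u + s • w) := by abel
      rw [this, norm_neg, aux_norm_comb hun hw1 huw]
      rw [show (d/2)^2 + s^2 = r^2 by rw [hs2]; ring, Real.sqrt_sq hr.le]
    · rw [dist_eq_norm]
      have hx2 : x₂ = x₁ + d • u := by rw [hdu]; simp [hv]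
      have : x₂ - (x₁ + ((d/2) • u + s • w)) = (d - d/2) • u + (-s) • w := by
        rw [hx2, sub_smul, neg_smul]; abel
      rw [this, aux_norm_comb hun hw1 huw]
      rw [show (d - d/2)^2 + (-s)^2 = r^2 by rw [neg_pow, hs2]; ring, Real.sqrt_sq hr.le]

theorem stmt_8 (n : ℕ) (hn : 2 ≤ n)
    (f : EuclideanSpace ℝ (Fin n) → EuclideanSpace ℝ (Fin n))
    (r : ℝ) (hr : 0 < r)
    (hpr : ∀ x y, dist x y = r → dist (f x) (f y) = r)
    (x₁ x₂ : EuclideanSpace ℝ (Fin n)) (h : dist x₁ x₂ ≤ 2 * r) :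
    dist (f x₁) (f x₂) ≤ 2 * r := by
  obtain ⟨z, h1, h2⟩ := aux_exists_mid hn r hr x₁ x₂ h
  calc dist (f x₁) (f x₂) ≤ dist (f x₁) (f z) + dist (f z) (f x₂) := dist_triangle _ _ _
    _ = r + r := by
        rw [hpr x₁ z h1, hpr z x₂ (by rwa [dist_comm])]
    _ = 2 * r := by ring
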